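/- arXiv:0811.3739 — 2 statements merged into one kernel-verified Lean document; each statement's English description precedes it below -/
import Mathlib

section
/- For every unit vector ψ in the linear span of ψ₁ and ψ₂ in ℂ³ ⊗ ℂ³, the six operators E₁,…,E₆ satisfy ∑_{k=1}^{6} E_k |ψ⟩⟨ψ| E_k† = |φ⟩⟨φ|, where φ = √α(β|0⟩⊗|0⟩ + |1⟩⊗|1⟩). Consequently, every density matrix whose support is contained in span{ψ₁, ψ₂} is mapped to |φ⟩⟨φ| by this separable operation. -/
open Kronecker Matrix ComplexOrder

noncomputable section

/-- Product (simple) vector in `ℂ^a ⊗ ℂ^b`, identified with functions `Fin a × Fin b → ℂ`. -/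
def IsSimpleVec {a b : ℕ} (v : Fin a × Fin b → ℂ) : Prop :=
  ∃ (x : Fin a → ℂ) (y : Fin b → ℂ), v = fun p => x p.1 * y p.2

/-- Rank-one projection `|v⟩⟨v|`. -/
def proj {d : Type*} [Fintype d] (v : d → ℂ) : Matrix d d ℂ :=
  Matrix.vecMulVec v (star v)

/-- The standard basis vector `|i⟩` of `ℂ³`. -/
def e (i : Fin 3) : Fin 3 → ℂ := Pi.single i 1

/-- The matrix unit `|i⟩⟨j|` on `ℂ³`. -/
def u (i j : Fin 3) : Matrix (Fin 3) (Fin 3) ℂ := Matrix.single i j 1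

/-- `α = (2 − √3)/4`. -/
def α : ℝ := (2 - Real.sqrt 3) / 4

/-- `β = 2 + √3`. -/
def β : ℝ := 2 + Real.sqrt 3

/-- `√α` as a complex number. -/
def sα : ℂ := ((Real.sqrt α : ℝ) : ℂ)

/-- `√β` as a complex number. -/
def sβ : ℂ := ((Real.sqrt β : ℝ) : ℂ)

/-- `√(2αβ)` as a complex number. -/
def sγ : ℂ := ((Real.sqrt (2 * α * β) : ℝ) : ℂ)

/-- The six Kraus operators `E₁, …, E₆` on `ℂ³ ⊗ ℂ³`. -/
def E : Fin 6 → Matrix (Fin 3 × Fin 3) (Fin 3 × Fin 3) ℂ :=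
  ![sα • ((sβ • u 0 0 + u 1 1) ⊗ₖ (sβ • u 0 1 + u 1 0)),
    sα • ((u 1 0 + sβ • u 0 1) ⊗ₖ (u 1 1 + sβ • u 0 0)),
    sα • ((sβ • u 0 0 + u 1 2) ⊗ₖ (sβ • u 0 2 + u 1 0)),
    sα • ((u 1 0 + sβ • u 0 2) ⊗ₖ (u 1 2 + sβ • u 0 0)),
    u 1 1 ⊗ₖ (sγ • u 1 1 + u 2 2),
    u 2 2 ⊗ₖ (u 1 1 + sγ • u 2 2)]

/-- `ψ₁ = (|0⟩⊗|1⟩ + |1⟩⊗|0⟩)/√2`. -/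
def ψ₁ : Fin 3 × Fin 3 → ℂ :=
  ((Real.sqrt 2 : ℝ) : ℂ)⁻¹ • (fun p => e 0 p.1 * e 1 p.2 + e 1 p.1 * e 0 p.2)

/-- `ψ₂ = (|0⟩⊗|2⟩ + |2⟩⊗|0⟩)/√2`. -/
def ψ₂ : Fin 3 × Fin 3 → ℂ :=
  ((Real.sqrt 2 : ℝ) : ℂ)⁻¹ • (fun p => e 0 p.1 * e 2 p.2 + e 2 p.1 * e 0 p.2)

/-- `φ = √α(β|0⟩⊗|0⟩ + |1⟩⊗|1⟩)`. -/
def φ : Fin 3 × Fin 3 → ℂ :=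
  sα • (fun p => ((β : ℝ) : ℂ) * (e 0 p.1 * e 0 p.2) + e 1 p.1 * e 1 p.2)


lemma hsβ : sβ * sβ = ((β:ℝ):ℂ) := by
  rw [sβ, ← Complex.ofReal_mul, Real.mul_self_sqrt]
  rw [β]; positivity

lemma E0def : E 0 = sα • ((sβ • u 0 0 + u 1 1) ⊗ₖ (sβ • u 0 1 + u 1 0)) := rfl
lemma E1def : E 1 = sα • ((u 1 0 + sβ • u 0 1) ⊗ₖ (u 1 1 + sβ • u 0 0)) := rfl
lemma E2def : E 2 = sα • ((sβ • u 0 0 + u 1 2) ⊗ₖ (sβ • u 0 2 + u 1 0)) := rfl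
lemma E3def : E 3 = sα • ((u 1 0 + sβ • u 0 2) ⊗ₖ (u 1 2 + sβ • u 0 0)) := rfl
lemma E4def : E 4 = u 1 1 ⊗ₖ (sγ • u 1 1 + u 2 2) := rfl
lemma E5def : E 5 = u 2 2 ⊗ₖ (u 1 1 + sγ • u 2 2) := rfl

lemma hk10 : E 0 *ᵥ ψ₁ = (((Real.sqrt 2)⁻¹ : ℝ) : ℂ) • φ := by
  simp only [E0def, E1def, E2def, E3def, E4def, E5def]
  funext p
  obtain ⟨i, j⟩ := p
  fin_cases i <;> fin_cases j <;>
    simp [ψ₁, ψ₂, φ, u, e, Matrix.mulVec, dotProduct, Fintype.sum_prod_type,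
      Fin.sum_univ_three, Matrix.single, Pi.single_apply] <;>
    ring_nf <;> rw [sq, hsβ] <;> ring
lemma hk11 : E 1 *ᵥ ψ₁ = (((Real.sqrt 2)⁻¹ : ℝ) : ℂ) • φ := by
  simp only [E0def, E1def, E2def, E3def, E4def, E5def]
  funext p
  obtain ⟨i, j⟩ := p
  fin_cases i <;> fin_cases j <;>
    simp [ψ₁, ψ₂, φ, u, e, Matrix.mulVec, dotProduct, Fintype.sum_prod_type,
      Fin.sum_univ_three, Matrix.single, Pi.single_apply] <;>
    ring_nf <;> rw [sq, hsβ] <;> ring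
lemma hk12 : E 2 *ᵥ ψ₁ = 0 := by
  simp only [E0def, E1def, E2def, E3def, E4def, E5def]
  funext p
  obtain ⟨i, j⟩ := p
  fin_cases i <;> fin_cases j <;>
    simp [ψ₁, ψ₂, φ, u, e, Matrix.mulVec, dotProduct, Fintype.sum_prod_type,
      Fin.sum_univ_three, Matrix.single, Pi.single_apply] <;>
    ring_nf <;> rw [sq, hsβ] <;> ring
lemma hk13 : E 3 *ᵥ ψ₁ = 0 := by
  simp only [E0def, E1def, E2def, E3def, E4def, E5def]
  funext p
  obtain ⟨i, j⟩ := p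
  fin_cases i <;> fin_cases j <;>
    simp [ψ₁, ψ₂, φ, u, e, Matrix.mulVec, dotProduct, Fintype.sum_prod_type,
      Fin.sum_univ_three, Matrix.single, Pi.single_apply] <;>
    ring_nf <;> rw [sq, hsβ] <;> ring
lemma hk14 : E 4 *ᵥ ψ₁ = 0 := by
  simp only [E0def, E1def, E2def, E3def, E4def, E5def]
  funext p
  obtain ⟨i, j⟩ := p
  fin_cases i <;> fin_cases j <;>
    simp [ψ₁, ψ₂, φ, u, e, Matrix.mulVec, dotProduct, Fintype.sum_prod_type,
      Fin.sum_univ_three, Matrix.single, Pi.single_apply] <;>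
    ring_nf <;> rw [sq, hsβ] <;> ring
lemma hk15 : E 5 *ᵥ ψ₁ = 0 := by
  simp only [E0def, E1def, E2def, E3def, E4def, E5def]
  funext p
  obtain ⟨i, j⟩ := p
  fin_cases i <;> fin_cases j <;>
    simp [ψ₁, ψ₂, φ, u, e, Matrix.mulVec, dotProduct, Fintype.sum_prod_type,
      Fin.sum_univ_three, Matrix.single, Pi.single_apply] <;>
    ring_nf <;> rw [sq, hsβ] <;> ring
lemma hk20 : E 0 *ᵥ ψ₂ = 0 := by
  simp only [E0def, E1def, E2def, E3def, E4def, E5def]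
  funext p
  obtain ⟨i, j⟩ := p
  fin_cases i <;> fin_cases j <;>
    simp [ψ₁, ψ₂, φ, u, e, Matrix.mulVec, dotProduct, Fintype.sum_prod_type,
      Fin.sum_univ_three, Matrix.single, Pi.single_apply] <;>
    ring_nf <;> rw [sq, hsβ] <;> ring
lemma hk21 : E 1 *ᵥ ψ₂ = 0 := by
  simp only [E0def, E1def, E2def, E3def, E4def, E5def]
  funext p
  obtain ⟨i, j⟩ := p
  fin_cases i <;> fin_cases j <;>
    simp [ψ₁, ψ₂, φ, u, e, Matrix.mulVec, dotProduct, Fintype.sum_prod_type,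
      Fin.sum_univ_three, Matrix.single, Pi.single_apply] <;>
    ring_nf <;> rw [sq, hsβ] <;> ring
lemma hk22 : E 2 *ᵥ ψ₂ = (((Real.sqrt 2)⁻¹ : ℝ) : ℂ) • φ := by
  simp only [E0def, E1def, E2def, E3def, E4def, E5def]
  funext p
  obtain ⟨i, j⟩ := p
  fin_cases i <;> fin_cases j <;>
    simp [ψ₁, ψ₂, φ, u, e, Matrix.mulVec, dotProduct, Fintype.sum_prod_type,
      Fin.sum_univ_three, Matrix.single, Pi.single_apply] <;>
    ring_nf <;> rw [sq, hsβ] <;> ring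
lemma hk23 : E 3 *ᵥ ψ₂ = (((Real.sqrt 2)⁻¹ : ℝ) : ℂ) • φ := by
  simp only [E0def, E1def, E2def, E3def, E4def, E5def]
  funext p
  obtain ⟨i, j⟩ := p
  fin_cases i <;> fin_cases j <;>
    simp [ψ₁, ψ₂, φ, u, e, Matrix.mulVec, dotProduct, Fintype.sum_prod_type,
      Fin.sum_univ_three, Matrix.single, Pi.single_apply] <;>
    ring_nf <;> rw [sq, hsβ] <;> ring
lemma hk24 : E 4 *ᵥ ψ₂ = 0 := by
  simp only [E0def, E1def, E2def, E3def, E4def, E5def]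
  funext p
  obtain ⟨i, j⟩ := p
  fin_cases i <;> fin_cases j <;>
    simp [ψ₁, ψ₂, φ, u, e, Matrix.mulVec, dotProduct, Fintype.sum_prod_type,
      Fin.sum_univ_three, Matrix.single, Pi.single_apply] <;>
    ring_nf <;> rw [sq, hsβ] <;> ring
lemma hk25 : E 5 *ᵥ ψ₂ = 0 := by
  simp only [E0def, E1def, E2def, E3def, E4def, E5def]
  funext p
  obtain ⟨i, j⟩ := p
  fin_cases i <;> fin_cases j <;>
    simp [ψ₁, ψ₂, φ, u, e, Matrix.mulVec, dotProduct, Fintype.sum_prod_type,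
      Fin.sum_univ_three, Matrix.single, Pi.single_apply] <;>
    ring_nf <;> rw [sq, hsβ] <;> ring

lemma proj_conj {d : Type*} [Fintype d] (A : Matrix d d ℂ) (v : d → ℂ) :
    A * proj v * Aᴴ = proj (A *ᵥ v) := by
  ext i j
  simp only [proj, Matrix.mul_apply, Matrix.vecMulVec_apply, Matrix.conjTranspose_apply,
    Matrix.mulVec, dotProduct, Pi.star_apply, star_sum, star_mul',
    Finset.sum_mul, Finset.mul_sum]
  exact Finset.sum_congr rfl fun l _ => Finset.sum_congr rfl fun k _ => by ring

lemma proj_herm {d : Type*} [Fintype d] (v : d → ℂ) : (proj v)ᴴ = proj v := by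
  ext i j
  simp [proj, Matrix.vecMulVec_apply, Matrix.conjTranspose_apply, mul_comm]

lemma proj_smul {d : Type*} [Fintype d] (c : ℂ) (v : d → ℂ) :
    proj (c • v) = (c * star c) • proj v := by
  ext i j
  simp [proj, Matrix.vecMulVec_apply, Matrix.smul_apply]
  ring

lemma mulVec_proj {d : Type*} [Fintype d] (v w : d → ℂ) :
    proj v *ᵥ w = (star v ⬝ᵥ w) • v := by
  ext i
  simp [proj, Matrix.mulVec, Matrix.vecMulVec_apply, dotProduct, Finset.sum_mul]
  exact Finset.sum_congr rfl fun k _ => by ring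

lemma mul_proj {d : Type*} [Fintype d] (A : Matrix d d ℂ) (v : d → ℂ) :
    A * proj v = Matrix.vecMulVec (A *ᵥ v) (star v) := by
  ext i j
  simp [proj, Matrix.mul_apply, Matrix.vecMulVec_apply, Matrix.mulVec, dotProduct,
    Finset.sum_mul]
  exact Finset.sum_congr rfl fun k _ => by ring

lemma trace_mul_proj {d : Type*} [Fintype d] (A : Matrix d d ℂ) (v : d → ℂ) :
    (A * proj v).trace = (star v) ᵥ* A ⬝ᵥ v := by
  simp only [Matrix.trace, Matrix.diag_apply, Matrix.mul_apply, proj,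
    Matrix.vecMulVec_apply, Matrix.vecMul, dotProduct, Pi.star_apply,
    Finset.sum_mul]
  rw [Finset.sum_comm]
  exact Finset.sum_congr rfl fun l _ => Finset.sum_congr rfl fun k _ => by ring

lemma vecMulVec_mul_mul {d : Type*} [Fintype d] (x a : d → ℂ) (ρ : Matrix d d ℂ) :
    Matrix.vecMulVec x a * ρ * (Matrix.vecMulVec x a)ᴴ = ((a ᵥ* ρ) ⬝ᵥ star a) • proj x := by
  ext i j
  simp only [proj, Matrix.mul_apply, Matrix.vecMulVec_apply, Matrix.conjTranspose_apply,
    Matrix.vecMul, dotProduct, Pi.star_apply, star_mul', Matrix.smul_apply,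
    Finset.sum_mul, Finset.mul_sum, smul_eq_mul]
  exact Finset.sum_congr rfl fun l _ => Finset.sum_congr rfl fun k _ => by ring

lemma vecMulVec_smul_left {d : Type*} [Fintype d] (c : ℂ) (x y : d → ℂ) :
    Matrix.vecMulVec (c • x) y = Matrix.vecMulVec x (c • y) := by
  ext i j; simp [Matrix.vecMulVec_apply]; ring

lemma vecMulVec_zero_left {d : Type*} [Fintype d] (y : d → ℂ) :
    Matrix.vecMulVec (0 : d → ℂ) y = 0 := by
  ext i j; simp [Matrix.vecMulVec_apply]

lemma vecMulVec_zero_right {d : Type*} [Fintype d] (y : d → ℂ) :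
    Matrix.vecMulVec y (0 : d → ℂ) = 0 := by
  ext i j; simp [Matrix.vecMulVec_apply]

lemma hr2 : (((Real.sqrt 2)⁻¹ : ℝ) : ℂ) * (((Real.sqrt 2)⁻¹ : ℝ) : ℂ) = (1/2 : ℂ) := by
  rw [← Complex.ofReal_mul, ← mul_inv, Real.mul_self_sqrt (by norm_num)]
  norm_num

lemma hr2' : ((Real.sqrt 2 : ℝ) : ℂ)⁻¹ * ((Real.sqrt 2 : ℝ) : ℂ)⁻¹ = (1/2 : ℂ) := by
  rw [← mul_inv, ← Complex.ofReal_mul, Real.mul_self_sqrt (by norm_num)]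
  norm_num

lemma n11 : star ψ₁ ⬝ᵥ ψ₁ = 1 := by
  simp [ψ₁, dotProduct, Fintype.sum_prod_type, Fin.sum_univ_three, e,
    Pi.single_apply, Complex.conj_ofReal, mul_comm]
  rw [hr2']
  norm_num

lemma n22 : star ψ₂ ⬝ᵥ ψ₂ = 1 := by
  simp [ψ₂, dotProduct, Fintype.sum_prod_type, Fin.sum_univ_three, e,
    Pi.single_apply, Complex.conj_ofReal, mul_comm]
  rw [hr2']
  norm_num

lemma n12 : star ψ₁ ⬝ᵥ ψ₂ = 0 := by
  simp [ψ₁, ψ₂, dotProduct, Fintype.sum_prod_type, Fin.sum_univ_three, e,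
    Pi.single_apply, Complex.conj_ofReal, mul_comm]

lemma n21 : star ψ₂ ⬝ᵥ ψ₁ = 0 := by
  simp [ψ₁, ψ₂, dotProduct, Fintype.sum_prod_type, Fin.sum_univ_three, e,
    Pi.single_apply, Complex.conj_ofReal, mul_comm]

lemma main_lemma (ρ : Matrix (Fin 3 × Fin 3) (Fin 3 × Fin 3) ℂ)
    (hH : ρᴴ = ρ) (ht : ρ.trace = 1)
    (hrg : ∀ x, ρ *ᵥ x ∈ Submodule.span ℂ {ψ₁, ψ₂}) :
    ∑ k, E k * ρ * (E k)ᴴ = proj φ := by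
  set rr : ℂ := ((Real.sqrt 2 : ℝ) : ℂ)⁻¹ with hrrdef
  set P : Matrix (Fin 3 × Fin 3) (Fin 3 × Fin 3) ℂ := proj ψ₁ + proj ψ₂ with hP
  have hPfix : ∀ w ∈ Submodule.span ℂ {ψ₁, ψ₂}, P *ᵥ w = w := by
    intro w hw
    obtain ⟨a, b, rfl⟩ := Submodule.mem_span_pair.mp hw
    simp only [hP, Matrix.add_mulVec, Matrix.mulVec_add, Matrix.mulVec_smul, mulVec_proj,
      n11, n12, n21, n22]
    module
  have hPH : Pᴴ = P := by rw [hP, Matrix.conjTranspose_add, proj_herm, proj_herm]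
  have hPρ : P * ρ = ρ := by
    ext i j
    have h := congrFun (hPfix _ (hrg (Pi.single j 1))) i
    rw [Matrix.mulVec_mulVec] at h
    simpa [Matrix.mulVec_single] using h
  have hρP : ρ * P = ρ := by
    have h2 : ρ * P = (Pᴴ * ρᴴ)ᴴ := by
      rw [Matrix.conjTranspose_mul, Matrix.conjTranspose_conjTranspose,
        Matrix.conjTranspose_conjTranspose]
    rw [h2, hPH, hH, hPρ, hH]
  have key : ∀ (k : Fin 6) (aa : Fin 3 × Fin 3 → ℂ), E k * P = Matrix.vecMulVec φ aa →
      E k * ρ * (E k)ᴴ = ((aa ᵥ* ρ) ⬝ᵥ star aa) • proj φ := by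
    intro k aa hk
    have h1 : E k * ρ * (E k)ᴴ = (E k * P) * ρ * (E k * P)ᴴ := by
      rw [Matrix.conjTranspose_mul, hPH, Matrix.mul_assoc (E k) P ρ, hPρ,
        ← Matrix.mul_assoc (E k * ρ) P ((E k)ᴴ), Matrix.mul_assoc (E k) ρ P, hρP]
    rw [h1, hk, vecMulVec_mul_mul]
  have hEP0 : E 0 * P = Matrix.vecMulVec φ (rr • star ψ₁) := by
    rw [hP, Matrix.mul_add, mul_proj, mul_proj, hk10, hk20, vecMulVec_smul_left]
    simp [vecMulVec_zero_left, hrrdef]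
  have hEP1 : E 1 * P = Matrix.vecMulVec φ (rr • star ψ₁) := by
    rw [hP, Matrix.mul_add, mul_proj, mul_proj, hk11, hk21, vecMulVec_smul_left]
    simp [vecMulVec_zero_left, hrrdef]
  have hEP2 : E 2 * P = Matrix.vecMulVec φ (rr • star ψ₂) := by
    rw [hP, Matrix.mul_add, mul_proj, mul_proj, hk12, hk22, vecMulVec_smul_left]
    simp [vecMulVec_zero_left, hrrdef]
  have hEP3 : E 3 * P = Matrix.vecMulVec φ (rr • star ψ₂) := by
    rw [hP, Matrix.mul_add, mul_proj, mul_proj, hk13, hk23, vecMulVec_smul_left]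
    simp [vecMulVec_zero_left, hrrdef]
  have hEP4 : E 4 * P = Matrix.vecMulVec φ (0 : Fin 3 × Fin 3 → ℂ) := by
    rw [hP, Matrix.mul_add, mul_proj, mul_proj, hk14, hk24]
    simp [vecMulVec_zero_left, vecMulVec_zero_right]
  have hEP5 : E 5 * P = Matrix.vecMulVec φ (0 : Fin 3 × Fin 3 → ℂ) := by
    rw [hP, Matrix.mul_add, mul_proj, mul_proj, hk15, hk25]
    simp [vecMulVec_zero_left, vecMulVec_zero_right]
  set T₁ : ℂ := (star ψ₁ ᵥ* ρ) ⬝ᵥ ψ₁ with hT1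
  set T₂ : ℂ := (star ψ₂ ᵥ* ρ) ⬝ᵥ ψ₂ with hT2
  have coeff1 : ((rr • star ψ₁) ᵥ* ρ) ⬝ᵥ star (rr • star ψ₁) = rr * rr * T₁ := by
    rw [hT1]
    simp [Matrix.smul_vecMul, star_smul, hrrdef, Complex.conj_ofReal,
      smul_dotProduct, dotProduct_smul, smul_eq_mul]
    ring
  have coeff2 : ((rr • star ψ₂) ᵥ* ρ) ⬝ᵥ star (rr • star ψ₂) = rr * rr * T₂ := by
    rw [hT2]
    simp [Matrix.smul_vecMul, star_smul, hrrdef, Complex.conj_ofReal,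
      smul_dotProduct, dotProduct_smul, smul_eq_mul]
    ring
  have hT : T₁ + T₂ = 1 := by
    rw [hT1, hT2, ← trace_mul_proj, ← trace_mul_proj, ← Matrix.trace_add, ← Matrix.mul_add,
      ← hP, hρP, ht]
  rw [Fin.sum_univ_six, key 0 _ hEP0, key 1 _ hEP1, key 2 _ hEP2, key 3 _ hEP3,
    key 4 _ hEP4, key 5 _ hEP5, coeff1, coeff2]
  simp only [Matrix.zero_vecMul, zero_dotProduct, zero_smul, add_zero]
  rw [← add_smul, ← add_smul, ← add_smul]
  have hc : rr * rr * T₁ + rr * rr * T₁ + rr * rr * T₂ + rr * rr * T₂ = 1 := by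
    rw [hrrdef, hr2']
    linear_combination hT
  rw [hc, one_smul]

lemma trace_proj {d : Type*} [Fintype d] (v : d → ℂ) : (proj v).trace = star v ⬝ᵥ v := by
  simp [proj, Matrix.trace, Matrix.vecMulVec_apply, dotProduct, Matrix.diag, mul_comm]


theorem kraus_maps_span_to_phi :
    (∀ ψ : Fin 3 × Fin 3 → ℂ, ψ ∈ Submodule.span ℂ {ψ₁, ψ₂} → star ψ ⬝ᵥ ψ = 1 →
      ∑ k, E k * proj ψ * (E k)ᴴ = proj φ) ∧
    (∀ ρ : Matrix (Fin 3 × Fin 3) (Fin 3 × Fin 3) ℂ, ρ.PosSemidef → ρ.trace = 1 →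
      LinearMap.range ρ.mulVecLin ≤ Submodule.span ℂ {ψ₁, ψ₂} →
      ∑ k, E k * ρ * (E k)ᴴ = proj φ) := by
  constructor
  · intro ψ hψ hnorm
    apply main_lemma
    · exact proj_herm ψ
    · rw [trace_proj, hnorm]
    · intro x
      rw [mulVec_proj]
      exact Submodule.smul_mem _ _ hψ
  · intro ρ hpsd ht hrange
    apply main_lemma ρ hpsd.1 ht
    intro x
    have := hrange (LinearMap.mem_range_self ρ.mulVecLin x)
    simpa using this
end
end

section
/- Let {A_k ⊗ B_k}_{k=1,…,n} be a separable operation on ℂ^a ⊗ ℂ^b (so ∑_k (A_k ⊗ B_k)†(A_k ⊗ B_k) = I), let ψ₁, ψ₂ be unit vectors in ℂ^a ⊗ ℂ^b, and let φ be an entangled unit vector such that ∑_k (A_k ⊗ B_k)|ψ_i⟩⟨ψ_i|(A_k ⊗ B_k)† = |φ⟩⟨φ| for both i = 1 and i = 2. Then no nonzero vector in the linear span of ψ₁ and ψ₂ is a product (simple) vector. -/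
open Kronecker Matrix

noncomputable section

lemma sum_mulVec' {m : Type*} [Fintype m] {n : ℕ} (M : Fin n → Matrix m m ℂ) (v : m → ℂ) :
    (∑ k, M k) *ᵥ v = ∑ k, M k *ᵥ v := by
  ext i
  simp only [mulVec, dotProduct, Finset.sum_apply, Matrix.sum_apply, Finset.sum_mul]
  rw [Finset.sum_comm]

lemma dotProduct_sum' {m : Type*} [Fintype m] {n : ℕ} (u : m → ℂ) (w : Fin n → m → ℂ) :
    u ⬝ᵥ (∑ k, w k) = ∑ k, u ⬝ᵥ w k := by
  simp only [dotProduct, Finset.sum_apply, Finset.mul_sum]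
  rw [Finset.sum_comm]

lemma vecMulVec_mulVec' {m : Type*} [Fintype m] (x y v : m → ℂ) :
    vecMulVec x y *ᵥ v = (y ⬝ᵥ v) • x := by
  ext i
  simp [vecMulVec_apply, mulVec, dotProduct, Finset.mul_sum, mul_assoc, mul_comm, mul_left_comm]

lemma proj_mulVec {m : Type*} [Fintype m] (x v : m → ℂ) :
    proj x *ᵥ v = (star x ⬝ᵥ v) • x :=
  vecMulVec_mulVec' _ _ _

lemma conj_proj {m : Type*} [Fintype m] (E : Matrix m m ℂ) (ψ : m → ℂ) :
    E * proj ψ * Eᴴ = proj (E *ᵥ ψ) := by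
  ext i j
  simp only [proj, Matrix.mul_apply, vecMulVec_apply, conjTranspose_apply, mulVec,
    dotProduct, Pi.star_apply, Finset.sum_mul, Finset.mul_sum, star_sum, star_mul']
  refine Finset.sum_congr rfl fun l _ => Finset.sum_congr rfl fun k _ => ?_
  ring

/-- If a sum of rank-one projections equals `proj φ` with `φ` a unit vector, then
each constituent vector is a multiple of `φ`. -/
lemma eq_smul_of_sum_proj {m : Type*} [Fintype m] {n : ℕ} (w : Fin n → m → ℂ)
    (φ : m → ℂ) (hφ : star φ ⬝ᵥ φ = 1) (h : ∑ k, proj (w k) = proj φ) (k : Fin n) :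
    w k = (star φ ⬝ᵥ w k) • φ := by
  set c : ℂ := star φ ⬝ᵥ w k with hc
  set u : m → ℂ := w k - c • φ with hu
  have hφu : star φ ⬝ᵥ u = 0 := by
    simp [hu, dotProduct_sub, dotProduct_smul, hφ, smul_eq_mul, ← hc]
  -- quadratic form of both sides at u
  have hq : ∑ j, (star u ⬝ᵥ w j) * (star (w j) ⬝ᵥ u) = 0 := by
    have h' := congrArg (fun M : Matrix m m ℂ => star u ⬝ᵥ (M *ᵥ u)) h
    simp only [sum_mulVec', dotProduct_sum', proj_mulVec, dotProduct_smul, smul_eq_mul,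
      hφu, mul_zero, zero_mul] at h'
    rw [← h']
    exact Finset.sum_congr rfl fun j _ => by ring
  -- each summand is nonnegative (it's |t|²)
  have key : ∀ j, (star u ⬝ᵥ w j) * (star (w j) ⬝ᵥ u) = (Complex.normSq (star (w j) ⬝ᵥ u) : ℂ) := by
    intro j
    have : star u ⬝ᵥ w j = starRingEnd ℂ (star (w j) ⬝ᵥ u) := by
      simp [dotProduct, map_sum, mul_comm]
    rw [this, Complex.normSq_eq_conj_mul_self]
  have hreal : ∑ j, Complex.normSq (star (w j) ⬝ᵥ u) = 0 := by
    have h'' := hq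
    simp only [key] at h''
    exact_mod_cast h''
  have hk0 : star (w k) ⬝ᵥ u = 0 := by
    have := (Finset.sum_eq_zero_iff_of_nonneg
      (fun j _ => Complex.normSq_nonneg (star (w j) ⬝ᵥ u))).mp hreal k (Finset.mem_univ k)
    exact Complex.normSq_eq_zero.mp this
  have huu : star u ⬝ᵥ u = 0 := by
    have : star u ⬝ᵥ u = star (w k) ⬝ᵥ u - starRingEnd ℂ c * (star φ ⬝ᵥ u) := by
      simp only [hu, star_sub, star_smul, sub_dotProduct, smul_dotProduct, smul_eq_mul,
        Complex.star_def]
    rw [this, hk0, hφu, mul_zero, sub_zero]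
  have hu0 : u = 0 := by
    open scoped ComplexOrder in
    exact dotProduct_star_self_eq_zero.mp huu
  have := sub_eq_zero.mp hu0
  exact this

lemma kron_mulVec_simple {a b : ℕ} (A : Matrix (Fin a) (Fin a) ℂ) (B : Matrix (Fin b) (Fin b) ℂ)
    (x : Fin a → ℂ) (y : Fin b → ℂ) :
    (A ⊗ₖ B) *ᵥ (fun p => x p.1 * y p.2) = fun p => (A *ᵥ x) p.1 * (B *ᵥ y) p.2 := by
  funext p
  show ∑ q : Fin a × Fin b, (A p.1 q.1 * B p.2 q.2) * (x q.1 * y q.2)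
      = (∑ i, A p.1 i * x i) * ∑ j, B p.2 j * y j
  rw [Fintype.sum_prod_type, Finset.sum_mul]
  refine Finset.sum_congr rfl fun i _ => ?_
  rw [Finset.mul_sum]
  exact Finset.sum_congr rfl fun j _ => by ring

theorem sep_transform_forces_entangled_span {a b n : ℕ}
    (A : Fin n → Matrix (Fin a) (Fin a) ℂ) (B : Fin n → Matrix (Fin b) (Fin b) ℂ)
    (hcomp : ∑ k, (A k ⊗ₖ B k)ᴴ * (A k ⊗ₖ B k) = 1)
    (ψ₁ ψ₂ : Fin a × Fin b → ℂ) (hψ₁ : star ψ₁ ⬝ᵥ ψ₁ = 1) (hψ₂ : star ψ₂ ⬝ᵥ ψ₂ = 1)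
    (φ : Fin a × Fin b → ℂ) (hφ : star φ ⬝ᵥ φ = 1) (hent : ¬ IsSimpleVec φ)
    (h₁ : ∑ k, (A k ⊗ₖ B k) * proj ψ₁ * (A k ⊗ₖ B k)ᴴ = proj φ)
    (h₂ : ∑ k, (A k ⊗ₖ B k) * proj ψ₂ * (A k ⊗ₖ B k)ᴴ = proj φ) :
    ∀ v ∈ Submodule.span ℂ {ψ₁, ψ₂}, v ≠ 0 → ¬ IsSimpleVec v := by
  intro v hv hv0 hsimple
  -- Each E_k ψ_i is a multiple of φ
  have key₁ : ∀ k, (A k ⊗ₖ B k) *ᵥ ψ₁ = (star φ ⬝ᵥ ((A k ⊗ₖ B k) *ᵥ ψ₁)) • φ := by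
    refine eq_smul_of_sum_proj (fun k => (A k ⊗ₖ B k) *ᵥ ψ₁) φ hφ ?_
    rw [← h₁]; exact Finset.sum_congr rfl fun k _ => (conj_proj _ _).symm
  have key₂ : ∀ k, (A k ⊗ₖ B k) *ᵥ ψ₂ = (star φ ⬝ᵥ ((A k ⊗ₖ B k) *ᵥ ψ₂)) • φ := by
    refine eq_smul_of_sum_proj (fun k => (A k ⊗ₖ B k) *ᵥ ψ₂) φ hφ ?_
    rw [← h₂]; exact Finset.sum_congr rfl fun k _ => (conj_proj _ _).symm
  -- write v as a combination
  rw [Submodule.mem_span_pair] at hv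
  obtain ⟨α, β, rfl⟩ := hv
  -- E_k v is a multiple of φ
  have hvk : ∀ k, ∃ d : ℂ, (A k ⊗ₖ B k) *ᵥ (α • ψ₁ + β • ψ₂) = d • φ := by
    intro k
    refine ⟨α * (star φ ⬝ᵥ ((A k ⊗ₖ B k) *ᵥ ψ₁)) + β * (star φ ⬝ᵥ ((A k ⊗ₖ B k) *ᵥ ψ₂)), ?_⟩
    rw [mulVec_add, mulVec_smul, mulVec_smul, key₁ k, key₂ k]
    simp [smul_smul, add_smul, hφ]
  obtain ⟨x, y, hxy⟩ := hsimple
  by_cases hall : ∀ k, (A k ⊗ₖ B k) *ᵥ (α • ψ₁ + β • ψ₂) = 0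
  · -- then v = 0 by completeness, contradiction
    apply hv0
    set w := α • ψ₁ + β • ψ₂ with hw
    have hww : star w ⬝ᵥ w = 0 := by
      have h1 : star w ⬝ᵥ ((1 : Matrix (Fin a × Fin b) (Fin a × Fin b) ℂ) *ᵥ w) = star w ⬝ᵥ w := by
        rw [one_mulVec]
      rw [← h1, ← hcomp, sum_mulVec', dotProduct_sum']
      refine Finset.sum_eq_zero fun k _ => ?_
      rw [← Matrix.mulVec_mulVec, dotProduct_mulVec, ← star_mulVec, hall k]
      simp
    open scoped ComplexOrder in
    exact dotProduct_star_self_eq_zero.mp hww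
  · push_neg at hall
    obtain ⟨k, hk⟩ := hall
    obtain ⟨d, hd⟩ := hvk k
    have hd0 : d ≠ 0 := by
      rintro rfl; rw [zero_smul] at hd; exact hk hd
    apply hent
    refine ⟨fun i => d⁻¹ * (A k *ᵥ x) i, fun j => (B k *ᵥ y) j, ?_⟩
    have heq : (A k ⊗ₖ B k) *ᵥ (α • ψ₁ + β • ψ₂) = fun p => (A k *ᵥ x) p.1 * (B k *ᵥ y) p.2 := by
      rw [hxy]; exact kron_mulVec_simple _ _ _ _
    rw [heq] at hd
    funext p
    have hp := congrFun hd p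
    simp only [Pi.smul_apply, smul_eq_mul] at hp
    field_simp [hp]
    rw [hp]; ring
end
end
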